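/- arXiv:math-ph/0608024 — 2 statements merged into one kernel-verified Lean document; each statement's English description precedes it below -/
import Mathlib

section
/- Let g : ℝⁿ → Mₙ(ℝ) be a smooth map whose value g(x) = (g_{ab}(x)) is a symmetric matrix at each x, and set 𝓛(x,y) = ∑_{a,b} g_{ab}(x) yᵃ yᵇ. Then for every (x,y) and every index j one has the identity (1/2) ( ∑_k yᵏ ∂²𝓛/∂yʲ∂xᵏ (x,y) − ∂𝓛/∂xʲ(x,y) ) = ∑_{k,l,m} g_{jk}(x) γᵏ_{lm}(x) yˡ yᵐ, where γᵏ_{lm}(x) = (1/2) ∑_h g^{kh}(x) ( ∂_m g_{lh}(x) + ∂_l g_{mh}(x) − ∂_h g_{lm}(x) ) are the Christoffel symbols of g (assuming g(x) is invertible with inverse (g^{kh}(x)) at the given x, ∂_m denoting ∂/∂xᵐ). -/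
open scoped BigOperators

/-- Partial derivative of `L` with respect to the base coordinate `xʲ` at `(x, y)`. -/
noncomputable def pdx {n : ℕ} (L : (Fin n → ℝ) → (Fin n → ℝ) → ℝ) (j : Fin n)
    (x y : Fin n → ℝ) : ℝ :=
  fderiv ℝ (fun x' => L x' y) x (Pi.single j 1)

/-- Partial derivative of `L` with respect to the fiber coordinate `yʲ` at `(x, y)`. -/
noncomputable def pdy {n : ℕ} (L : (Fin n → ℝ) → (Fin n → ℝ) → ℝ) (j : Fin n)
    (x y : Fin n → ℝ) : ℝ :=
  fderiv ℝ (fun y' => L x y') y (Pi.single j 1)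

/-- Mixed second partial derivative `∂²L/∂yʲ∂xᵏ` at `(x, y)`. -/
noncomputable def pdydx {n : ℕ} (L : (Fin n → ℝ) → (Fin n → ℝ) → ℝ) (j k : Fin n)
    (x y : Fin n → ℝ) : ℝ :=
  fderiv ℝ (fun x' => pdy L j x' y) x (Pi.single k 1)

/-- Partial derivative `∂_m g_{lh}` of the metric coefficient `g_{lh}` at `x`. -/
noncomputable def pdg {n : ℕ} (g : (Fin n → ℝ) → Matrix (Fin n) (Fin n) ℝ)
    (m l h : Fin n) (x : Fin n → ℝ) : ℝ :=
  fderiv ℝ (fun x' => g x' l h) x (Pi.single m 1)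

/- Auxiliary lemmas -/

noncomputable def prX {n : ℕ} (a : Fin n) : (Fin n → ℝ) →L[ℝ] ℝ := ContinuousLinearMap.proj a

lemma quad_hasfd {n : ℕ} (c : Matrix (Fin n) (Fin n) ℝ) (y : Fin n → ℝ) :
    HasFDerivAt (fun y' : Fin n → ℝ => ∑ a, ∑ b, c a b * y' a * y' b)
      (∑ a, ∑ b, c a b • (y a • prX b + y b • prX a)) y := by
  apply HasFDerivAt.fun_sum
  intro a _
  apply HasFDerivAt.fun_sum
  intro b _
  have h1 : HasFDerivAt (fun y' : Fin n → ℝ => y' a * y' b)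
      (y a • prX b + y b • prX a) y := ((prX a).hasFDerivAt).mul ((prX b).hasFDerivAt)
  have := h1.const_mul (c a b)
  simp only [mul_assoc]
  exact this

lemma quad_fderiv_eval {n : ℕ} (c : Matrix (Fin n) (Fin n) ℝ) (y : Fin n → ℝ) (j : Fin n) :
    fderiv ℝ (fun y' : Fin n → ℝ => ∑ a, ∑ b, c a b * y' a * y' b) y (Pi.single j 1)
      = (∑ a, c a j * y a) + ∑ b, c j b * y b := by
  rw [(quad_hasfd c y).fderiv]
  simp [prX, Pi.single_apply, Finset.mul_sum, mul_ite, Finset.sum_add_distrib, mul_comm]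

lemma fderiv_sum_mul_const {n : ℕ} {ι : Type*} (s : Finset ι)
    (f : ι → (Fin n → ℝ) → ℝ) (c : ι → ℝ) (x v : Fin n → ℝ)
    (hf : ∀ i ∈ s, DifferentiableAt ℝ (f i) x) :
    fderiv ℝ (fun x' => ∑ i ∈ s, f i x' * c i) x v
      = ∑ i ∈ s, fderiv ℝ (f i) x v * c i := by
  classical
  have h : HasFDerivAt (fun x' => ∑ i ∈ s, f i x' * c i)
      (∑ i ∈ s, c i • fderiv ℝ (f i) x) x := by
    apply HasFDerivAt.fun_sum
    intro i hi
    exact ((hf i hi).hasFDerivAt).mul_const (c i)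
  rw [h.fderiv]
  simp [mul_comm]

lemma algX (n : ℕ) (G Gi : Matrix (Fin n) (Fin n) ℝ) (P : Fin n → Fin n → Fin n → ℝ)
    (y : Fin n → ℝ) (j : Fin n)
    (hd : ∀ h, ∑ k, G j k * Gi k h = if j = h then 1 else 0) :
    ∑ k, ∑ l, ∑ m, G j k * ((1/2 : ℝ) * ∑ h, Gi k h * P l m h) * y l * y m
      = (1/2) * ∑ l, ∑ m, P l m j * y l * y m := by
  rw [Finset.sum_comm]
  rw [Finset.mul_sum]
  refine Finset.sum_congr rfl fun l _ => ?_
  rw [Finset.sum_comm, Finset.mul_sum]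
  refine Finset.sum_congr rfl fun m _ => ?_
  have h1 : ∑ k, G j k * ((1/2 : ℝ) * ∑ h, Gi k h * P l m h) * y l * y m
      = ∑ h, (∑ k, G j k * Gi k h) * ((1/2) * P l m h * y l * y m) := by
    simp only [Finset.mul_sum, Finset.sum_mul]
    rw [Finset.sum_comm]
    exact Finset.sum_congr rfl fun h _ => Finset.sum_congr rfl fun k _ => by ring
  rw [h1]
  simp only [hd, ite_mul, one_mul, zero_mul]
  rw [Finset.sum_ite_eq Finset.univ j]
  simp
  ring

/-- For a smooth symmetric-matrix-valued map `g` and the energy Lagrangian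
`𝓛(x,y) = ∑ g_{ab}(x) yᵃ yᵇ`, one has, at any point where `g(x)` is invertible with inverse
`g^{kh}`, the identity
`(1/2)(∑_k yᵏ ∂²𝓛/∂yʲ∂xᵏ − ∂𝓛/∂xʲ) = ∑_{k,l,m} g_{jk} γᵏ_{lm} yˡ yᵐ`,
where `γᵏ_{lm} = (1/2) ∑_h g^{kh} (∂_m g_{lh} + ∂_l g_{mh} − ∂_h g_{lm})` are the
Christoffel symbols of `g`. -/
theorem statement1 (n : ℕ) (g : (Fin n → ℝ) → Matrix (Fin n) (Fin n) ℝ)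
    (hg : ∀ a b : Fin n, ContDiff ℝ (⊤ : ℕ∞) (fun x => g x a b))
    (hsymm : ∀ x, (g x).IsSymm)
    (L : (Fin n → ℝ) → (Fin n → ℝ) → ℝ)
    (hLdef : ∀ x y, L x y = ∑ a, ∑ b, g x a b * y a * y b)
    (x y : Fin n → ℝ) (j : Fin n)
    (ginv : Matrix (Fin n) (Fin n) ℝ)
    (hinv : g x * ginv = 1 ∧ ginv * g x = 1) :
    (1 / 2) * ((∑ k, y k * pdydx L j k x y) - pdx L j x y)
      = ∑ k, ∑ l, ∑ m, g x j k *
          ((1 / 2) * ∑ h, ginv k h * (pdg g m l h x + pdg g l m h x - pdg g h l m x))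
            * y l * y m := by
  classical
  have hdiff : ∀ (a b : Fin n) (x' : Fin n → ℝ),
      DifferentiableAt ℝ (fun x'' => g x'' a b) x' :=
    fun a b x' => ((hg a b).differentiable (by simp)).differentiableAt
  have hsg : ∀ (x' : Fin n → ℝ) (a b : Fin n), g x' a b = g x' b a :=
    fun x' a b => (hsymm x').apply b a
  have hsympdg : ∀ k a b : Fin n, pdg g k a b x = pdg g k b a x := by
    intro k a b
    unfold pdg
    have he : (fun x' => g x' a b) = (fun x' => g x' b a) := funext fun x' => hsg x' a b
    rw [he]
  -- derivative in y
  have hpdy : ∀ x' : Fin n → ℝ, pdy L j x' y = ∑ a, (g x' a j + g x' j a) * y a := by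
    intro x'
    unfold pdy
    rw [show (fun y' => L x' y') = (fun y' => ∑ a, ∑ b, g x' a b * y' a * y' b) from
      funext fun y' => hLdef x' y', quad_fderiv_eval]
    rw [← Finset.sum_add_distrib]
    exact Finset.sum_congr rfl fun a _ => by ring
  -- mixed derivative
  have hpdydx : ∀ k : Fin n,
      pdydx L j k x y = ∑ a, (pdg g k a j x + pdg g k j a x) * y a := by
    intro k
    unfold pdydx
    rw [show (fun x' => pdy L j x' y) = fun x' => ∑ a, (g x' a j + g x' j a) * y a from
      funext hpdy]
    rw [fderiv_sum_mul_const Finset.univ (fun a x' => g x' a j + g x' j a) y x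
      (Pi.single k 1) (fun a _ => (hdiff a j x).add (hdiff j a x))]
    refine Finset.sum_congr rfl fun a _ => ?_
    rw [fderiv_fun_add (hdiff a j x) (hdiff j a x)]
    rfl
  -- derivative in x
  have hpdx : pdx L j x y = ∑ a, ∑ b, pdg g j a b x * (y a * y b) := by
    unfold pdx
    have hre : (fun x' => L x' y)
        = fun x' => ∑ p ∈ Finset.univ ×ˢ Finset.univ, g x' p.1 p.2 * (y p.1 * y p.2) := by
      funext x'
      rw [hLdef, Finset.sum_product]
      exact Finset.sum_congr rfl fun a _ => Finset.sum_congr rfl fun b _ => by ring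
    rw [hre, fderiv_sum_mul_const (Finset.univ ×ˢ Finset.univ)
      (fun p x' => g x' p.1 p.2) (fun p => y p.1 * y p.2) x (Pi.single j 1)
      (fun p _ => hdiff p.1 p.2 x), Finset.sum_product]
    rfl
  -- inverse relation
  have hd : ∀ h : Fin n, ∑ k, g x j k * ginv k h = if j = h then 1 else 0 := by
    intro h
    have := congrFun (congrFun hinv.1 j) h
    simpa [Matrix.mul_apply, Matrix.one_apply] using this
  rw [algX n (g x) ginv (fun l m h => pdg g m l h x + pdg g l m h x - pdg g h l m x) y j hd]
  have e1 : ∀ k : Fin n, y k * pdydx L j k x y = ∑ a, 2 * pdg g k j a x * y k * y a := by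
    intro k
    rw [hpdydx k, Finset.mul_sum]
    refine Finset.sum_congr rfl fun a _ => ?_
    rw [hsympdg k a j]
    ring
  rw [Finset.sum_congr rfl fun k _ => e1 k, hpdx]
  congr 1
  have tA : ∑ l, ∑ m, pdg g m l j x * y l * y m
      = ∑ k, ∑ a, pdg g k j a x * y k * y a := by
    rw [Finset.sum_comm]
    refine Finset.sum_congr rfl fun m _ => Finset.sum_congr rfl fun l _ => ?_
    rw [hsympdg m l j]
    ring
  have tB : ∑ l, ∑ m, pdg g l m j x * y l * y m
      = ∑ k, ∑ a, pdg g k j a x * y k * y a := by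
    refine Finset.sum_congr rfl fun l _ => Finset.sum_congr rfl fun m _ => ?_
    rw [hsympdg l m j]
  have tU : ∑ a, ∑ b, pdg g j a b x * (y a * y b)
      = ∑ l, ∑ m, pdg g j l m x * y l * y m :=
    Finset.sum_congr rfl fun a _ => Finset.sum_congr rfl fun b _ => by ring
  simp only [two_mul, add_mul, sub_mul, Finset.sum_add_distrib, Finset.sum_sub_distrib,
    tA, tB]
  rw [tU]
end

section
/- Let k ≥ 1 and let v⃗ : ℝ → ℝᵏ be a three-times differentiable function of the arclength l. Define ϖ⃗ := v⃗″ + (1/2)|v⃗|² v⃗ (the image of v⃗′ under the sympletic operator 𝓙) and the matrix-valued function M := v⃗ ⊗ v⃗′ − v⃗′ ⊗ v⃗, where (a⃗ ⊗ b⃗)_{ij} = aᵢbⱼ. Then: (i) M′ = v⃗ ⊗ ϖ⃗ − ϖ⃗ ⊗ v⃗, so that M is an explicit antiderivative realizing the nonlocal term D⁻¹(v⃗ ∧ ϖ⃗) of the cosympletic operator; and (ii) ϖ⃗′ + v⃗⌋M = v⃗‴ + (3/2)|v⃗|² v⃗′, where (v⃗⌋M)ⱼ = ∑ᵢ vᵢ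 Mᵢⱼ. Hence the recursion operator 𝓡 = 𝓗 ∘ 𝓙 applied to v⃗′ yields the vector mKdV flow v⃗‴ + (3/2)|v⃗|² v⃗′. -/
open scoped BigOperators

/-- Let `v⃗ : ℝ → ℝᵏ` be three-times differentiable in the arclength
`l`, let `ϖ⃗ := v⃗″ + (1/2)|v⃗|² v⃗` (the image of `v⃗′` under the sympletic operator
`𝓙`), and let `M := v⃗ ⊗ v⃗′ − v⃗′ ⊗ v⃗`.  Then
(i) `M′ = v⃗ ⊗ ϖ⃗ − ϖ⃗ ⊗ v⃗`, so `M` is an explicit antiderivative realizing the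
nonlocal term `D⁻¹(v⃗ ∧ ϖ⃗)` of the cosympletic operator; and
(ii) `ϖ⃗′ + v⃗⌋M = v⃗‴ + (3/2)|v⃗|² v⃗′`, where `(v⃗⌋M)ⱼ = ∑ᵢ vᵢ Mᵢⱼ`.
Hence the recursion operator `𝓡 = 𝓗 ∘ 𝓙` applied to `v⃗′` yields the vector mKdV flow. -/
theorem statement19 (k : ℕ) (hk : 1 ≤ k) (v : ℝ → Fin k → ℝ)
    (hv : Differentiable ℝ v) (hv' : Differentiable ℝ (deriv v))
    (hv'' : Differentiable ℝ (deriv (deriv v))) :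
    ∀ ϖ : ℝ → Fin k → ℝ,
      (∀ l, ϖ l = deriv (deriv v) l + ((1 / 2) * ∑ i, v l i ^ 2) • v l) →
    ∀ M : ℝ → Fin k → Fin k → ℝ,
      (∀ l, M l = fun i j => v l i * deriv v l j - deriv v l i * v l j) →
    (∀ l, deriv M l = fun i j => v l i * ϖ l j - ϖ l i * v l j)
    ∧ (∀ l (j : Fin k), deriv ϖ l j + ∑ i, v l i * M l i j
        = deriv (deriv (deriv v)) l j + (3 / 2) * (∑ i, v l i ^ 2) * deriv v l j) := by
  intro ϖ hϖ M hM
  -- componentwise derivatives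
  have hvi : ∀ l i, HasDerivAt (fun l => v l i) (deriv v l i) l := fun l i =>
    hasDerivAt_pi.mp (hv l).hasDerivAt i
  have hvi' : ∀ l i, HasDerivAt (fun l => deriv v l i) (deriv (deriv v) l i) l := fun l i =>
    hasDerivAt_pi.mp (hv' l).hasDerivAt i
  have hvi'' : ∀ l i, HasDerivAt (fun l => deriv (deriv v) l i) (deriv (deriv (deriv v)) l i) l :=
    fun l i => hasDerivAt_pi.mp (hv'' l).hasDerivAt i
  have hϖj : ∀ l j, ϖ l j = deriv (deriv v) l j + ((1 / 2) * ∑ i, v l i ^ 2) * v l j := by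
    intro l j; rw [hϖ l]; simp
  have hMij : ∀ l i j, M l i j = v l i * deriv v l j - deriv v l i * v l j := by
    intro l i j; rw [hM l]
  -- derivative of the sum of squares
  have hs : ∀ l, HasDerivAt (fun l => ∑ i, v l i ^ 2)
      (2 * ∑ i, v l i * deriv v l i) l := by
    intro l
    have : HasDerivAt (fun l => ∑ i, v l i ^ 2)
        (∑ i, 2 * v l i * deriv v l i) l := by
      refine HasDerivAt.fun_sum fun i _ => ?_
      simpa [mul_comm, mul_assoc, mul_left_comm] using (hvi l i).fun_pow 2
    simpa [Finset.mul_sum, mul_comm, mul_assoc, mul_left_comm] using this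
  -- part (i)
  have hMderiv : ∀ l, HasDerivAt M (fun i j => v l i * ϖ l j - ϖ l i * v l j) l := by
    intro l
    rw [show M = fun l i j => v l i * deriv v l j - deriv v l i * v l j from funext hM]
    refine hasDerivAt_pi.mpr fun i => hasDerivAt_pi.mpr fun j => ?_
    have h := ((hvi l i).mul (hvi' l j)).sub ((hvi' l i).mul (hvi l j))
    convert h using 1
    · rfl
    rw [hϖj l j, hϖj l i]; ring
  -- derivative of ϖ
  have hϖderiv : ∀ l, HasDerivAt ϖ (fun j => deriv (deriv (deriv v)) l j
      + ((1 / 2) * (2 * ∑ i, v l i * deriv v l i)) * v l j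
      + ((1 / 2) * ∑ i, v l i ^ 2) * deriv v l j) l := by
    intro l
    rw [show ϖ = fun l j => deriv (deriv v) l j + ((1 / 2) * ∑ i, v l i ^ 2) * v l j from
      funext fun l => funext (hϖj l)]
    refine hasDerivAt_pi.mpr fun j => ?_
    have h := (hvi'' l j).add ((((hs l).const_mul ((1:ℝ)/2)).mul (hvi l j)))
    convert h using 1
    · rfl
    ring
  constructor
  · intro l
    exact (hMderiv l).deriv
  · intro l j
    rw [(hϖderiv l).deriv]
    have hsum : ∑ i, v l i * M l i j
        = (∑ i, v l i ^ 2) * deriv v l j - (∑ i, v l i * deriv v l i) * v l j := by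
      rw [Finset.sum_mul, Finset.sum_mul, ← Finset.sum_sub_distrib]
      refine Finset.sum_congr rfl fun i _ => ?_
      rw [hMij l i j]; ring
    rw [hsum]; ring
end
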